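/- arXiv:0907.4496 — 3 statements merged into one kernel-verified Lean document; each statement's English description precedes it below -/
import Mathlib

section
/- Let G ≠ {1} be a finite group, H ≤ G a subgroup containing no nontrivial normal subgroup of G (i.e., ⋂_{g∈G} gHg⁻¹ = {1}), let H₁, …, H_r be subgroups of H, and let 0 → M → ⊕_{i=1}^r ℤ[G/H_i] → ω(G/H) → 0 be an exact sequence of ℤ[G]-modules, where M is a G-lattice. Then the G-action on M fails to be faithful if and only if r = 1 and H₁ = H. -/
open LinearMap Module

section TraceAdd

variable {R P : Type*} [CommRing R] [AddCommGroup P] [Module R P]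
  [Module.Free R P] [Module.Finite R P]

/-- Trace additivity along an invariant submodule. -/
theorem my_trace_add_of_invariant (N : Submodule R P) (φ : P →ₗ[R] P)
    (hφ : ∀ x ∈ N, φ x ∈ N) (hφ' : N ≤ N.comap φ)
    [Module.Free R N] [Module.Finite R N]
    [Module.Free R (P ⧸ N)] [Module.Finite R (P ⧸ N)] :
    trace R P φ = trace R N (φ.restrict hφ)
      + trace R (P ⧸ N) (Submodule.mapQ N N φ hφ') := by
  obtain ⟨σ, hσ⟩ := Module.projective_lifting_property N.mkQ LinearMap.id
    N.mkQ_surjective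
  have hσ' : ∀ y, N.mkQ (σ y) = y := fun y => LinearMap.congr_fun hσ y
  have hmem : ∀ x : P, x - σ (N.mkQ x) ∈ N := by
    intro x
    have h0 : N.mkQ (x - σ (N.mkQ x)) = 0 := by simp [map_sub, hσ']
    rwa [← LinearMap.mem_ker, Submodule.ker_mkQ] at h0
  set p : P →ₗ[R] P := LinearMap.id - σ ∘ₗ N.mkQ with hp
  have hpmem : ∀ x, p x ∈ N := fun x => hmem x
  set ψ : P →ₗ[R] N := LinearMap.codRestrict N (φ ∘ₗ p) (fun x => hφ _ (hpmem x)) with hψ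
  have hsplit : φ = N.subtype ∘ₗ ψ + (φ ∘ₗ σ) ∘ₗ N.mkQ := by
    ext x
    simp [hψ, hp, map_sub]
  conv_lhs => rw [hsplit]
  rw [map_add]
  congr 1
  · rw [trace_comp_comm']
    congr 1
    ext ⟨n, hn⟩
    have : N.mkQ n = 0 := (Submodule.Quotient.mk_eq_zero N).mpr hn
    simp [hψ, hp, this, LinearMap.restrict_apply]
  · rw [trace_comp_comm']
    congr 1
    have h1 : N.mkQ ∘ₗ (φ ∘ₗ σ) = (Submodule.mapQ N N φ hφ') ∘ₗ (N.mkQ ∘ₗ σ) := by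
      rw [← comp_assoc, ← comp_assoc, Submodule.mapQ_mkQ]
    rw [h1, hσ, comp_id]

end TraceAdd

section TracePerm

/-- The trace of an endomorphism permuting a basis is the number of fixed basis vectors. -/
theorem my_trace_perm {R M ι : Type*} [CommRing R] [AddCommGroup M] [Module R M]
    [Fintype ι] (b : Basis ι R M) (σ : ι → ι) (φ : M →ₗ[R] M)
    (h : ∀ j, φ (b j) = b (σ j)) :
    trace R M φ = (Nat.card {j // σ j = j} : R) := by
  classical
  rw [LinearMap.trace_eq_matrix_trace R b, Matrix.trace]
  have hdiag : ∀ j, (LinearMap.toMatrix b b φ) j j = if σ j = j then 1 else 0 := by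
    intro j
    rw [LinearMap.toMatrix_apply, h j, Basis.repr_self, Finsupp.single_apply]
  calc (∑ j, Matrix.diag (LinearMap.toMatrix b b φ) j)
      = ∑ j, if σ j = j then (1 : R) else 0 := by
        refine Finset.sum_congr rfl fun j _ => hdiag j
    _ = ((Finset.univ.filter fun j => σ j = j).card : R) := by
        rw [Finset.sum_boole]
    _ = (Nat.card {j // σ j = j} : R) := by
        rw [Nat.card_eq_fintype_card, Fintype.card_subtype]

end TracePerm

section RankOne

theorem my_endo_eq_id {M : Type*} [AddCommGroup M] [Module ℤ M] [Module.Free ℤ M]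
    [Module.Finite ℤ M] (hrk : Module.finrank ℤ M = 1) (φ : M →ₗ[ℤ] M)
    (hφ : trace ℤ M φ = 1) : φ = LinearMap.id := by
  classical
  set b := Module.Free.chooseBasis ℤ M with hb
  have hcard : Fintype.card (Module.Free.ChooseBasisIndex ℤ M) = 1 := by
    rw [← Module.finrank_eq_card_chooseBasisIndex, hrk]
  obtain ⟨i0, hi0⟩ := Fintype.card_eq_one_iff.mp hcard
  have huniv : (Finset.univ : Finset (Module.Free.ChooseBasisIndex ℤ M)) = {i0} := by
    ext j; simp [hi0 j]
  have htr : trace ℤ M φ = b.repr (φ (b i0)) i0 := by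
    rw [LinearMap.trace_eq_matrix_trace ℤ b, Matrix.trace, huniv, Finset.sum_singleton]
    simp [Matrix.diag, LinearMap.toMatrix_apply]
  have hrepr : φ (b i0) = b i0 := by
    have := Basis.sum_repr b (φ (b i0))
    rw [huniv, Finset.sum_singleton] at this
    rw [← this, ← htr, hφ]
    exact (Module.toDistribMulAction (R := ℤ) (M := M)).toMulAction.one_smul _
  refine b.ext fun j => ?_
  rw [hi0 j, hrepr, LinearMap.id_apply]

end RankOne

section Counting

variable {G : Type*} [Group G] [Finite G]

theorem my_smul_mk_iff (K : Subgroup G) (g z : G) :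
    g • (QuotientGroup.mk z : G ⧸ K) = QuotientGroup.mk z ↔ z⁻¹ * g⁻¹ * z ∈ K := by
  rw [MulAction.Quotient.smul_mk, smul_eq_mul, QuotientGroup.eq, mul_inv_rev]

theorem my_nonfixed_le {K H : Subgroup G} (hKH : K ≤ H) (g : G) :
    Nat.card {y : G ⧸ H // g • y ≠ y} ≤ Nat.card {x : G ⧸ K // g • x ≠ x} := by
  classical
  refine Nat.card_le_card_of_injective
    (fun y => ⟨QuotientGroup.mk y.1.out, fun hfix => y.2 ?_⟩) ?_
  · rw [my_smul_mk_iff] at hfix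
    have : g • (QuotientGroup.mk y.1.out : G ⧸ H) = QuotientGroup.mk y.1.out :=
      (my_smul_mk_iff H g _).mpr (hKH hfix)
    rwa [QuotientGroup.out_eq'] at this
  · intro y y' hyy'
    have h2 : (y.1.out)⁻¹ * y'.1.out ∈ K := (QuotientGroup.eq).mp (Subtype.mk_eq_mk.mp hyy')
    have h3 : (QuotientGroup.mk y.1.out : G ⧸ H) = QuotientGroup.mk y'.1.out :=
      (QuotientGroup.eq).mpr (hKH h2)
    rw [QuotientGroup.out_eq', QuotientGroup.out_eq'] at h3
    exact Subtype.ext h3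

theorem my_nonfixed_two_le {K H : Subgroup G} (hKH : K ≤ H) (hne : K ≠ H) (g : G) :
    2 * Nat.card {y : G ⧸ H // g • y ≠ y} ≤ Nat.card {x : G ⧸ K // g • x ≠ x} := by
  classical
  obtain ⟨h, hhH, hhK⟩ : ∃ h, h ∈ H ∧ h ∉ K := by
    by_contra hc
    push_neg at hc
    exact hne (le_antisymm hKH hc)
  have key : ∀ (y : {y : G ⧸ H // g • y ≠ y}) (c : G), c ∈ H →
      g • (QuotientGroup.mk (y.1.out * c) : G ⧸ K) ≠ QuotientGroup.mk (y.1.out * c) := by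
    intro y c hc hfix
    rw [my_smul_mk_iff] at hfix
    apply y.2
    have h5 : (y.1.out)⁻¹ * g⁻¹ * y.1.out ∈ H := by
      have h6 : c * ((y.1.out * c)⁻¹ * g⁻¹ * (y.1.out * c)) * c⁻¹ ∈ H := by
        exact H.mul_mem (H.mul_mem hc (hKH hfix)) (H.inv_mem hc)
      have h7 : c * ((y.1.out * c)⁻¹ * g⁻¹ * (y.1.out * c)) * c⁻¹
          = (y.1.out)⁻¹ * g⁻¹ * y.1.out := by group
      rwa [h7] at h6
    have := (my_smul_mk_iff H g y.1.out).mpr h5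
    rwa [QuotientGroup.out_eq'] at this
  have hcard : Nat.card ({y : G ⧸ H // g • y ≠ y} × Bool)
      = 2 * Nat.card {y : G ⧸ H // g • y ≠ y} := by
    rw [Nat.card_prod, Nat.card_eq_fintype_card (α := Bool)]
    simp [mul_comm]
  have hifmem : ∀ b : Bool, (if b then (1:G) else h) ∈ H := by
    intro b; cases b
    · simpa using hhH
    · exact H.one_mem
  rw [← hcard]
  refine Nat.card_le_card_of_injective
    (fun yb => ⟨QuotientGroup.mk (yb.1.1.out * (if yb.2 then 1 else h)), ?_⟩) ?_
  · exact key yb.1 _ (hifmem yb.2)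
  · rintro ⟨y, b⟩ ⟨y', b'⟩ hyy'
    have h2 : (y.1.out * (if b then 1 else h))⁻¹ * (y'.1.out * (if b' then 1 else h)) ∈ K :=
      (QuotientGroup.eq).mp (Subtype.mk_eq_mk.mp hyy')
    have hyeq : y = y' := by
      have h3 : (y.1.out)⁻¹ * y'.1.out ∈ H := by
        have h4 := H.mul_mem (H.mul_mem (hifmem b)
          (hKH h2)) (H.inv_mem (hifmem b'))
        have h5 : (if b then 1 else h) * ((y.1.out * (if b then 1 else h))⁻¹
            * (y'.1.out * (if b' then 1 else h))) * (if b' then 1 else h)⁻¹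
            = (y.1.out)⁻¹ * y'.1.out := by group
        rwa [h5] at h4
      have h6 : (QuotientGroup.mk y.1.out : G ⧸ H) = QuotientGroup.mk y'.1.out :=
        (QuotientGroup.eq).mpr h3
      rw [QuotientGroup.out_eq', QuotientGroup.out_eq'] at h6
      exact Subtype.ext h6
    subst hyeq
    have h7 : (if b then 1 else h)⁻¹ * (if b' then 1 else h) ∈ K := by
      have h8 : (y.1.out * (if b then 1 else h))⁻¹ * (y.1.out * (if b' then 1 else h))
          = (if b then 1 else h)⁻¹ * (if b' then 1 else h) := by group
      rwa [h8] at h2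
    have h8 : (if b then (1:G) else h)⁻¹ * (if b' then 1 else h) ∈ K := h7
    cases b <;> cases b' <;> simp only [if_true, if_false, Bool.false_eq_true, ↓reduceIte] at h8
    · rfl
    · exact absurd (by simpa using K.inv_mem h8) hhK
    · exact absurd (by simpa using h8) hhK
    · rfl

end Counting

set_option maxHeartbeats 1600000 in
theorem my_key {G : Type*} [Group G] [Finite G]
    (H : Subgroup G) (r : ℕ) (Hs : Fin r → Subgroup G)
    (M : Type*) [AddCommGroup M] [Module ℤ M] [Module.Free ℤ M] [Module.Finite ℤ M]
    (ρ : Representation ℤ G M)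
    (f : M →ₗ[ℤ] ((i : Fin r) → ((G ⧸ Hs i) →₀ ℤ)))
    (π : ((i : Fin r) → ((G ⧸ Hs i) →₀ ℤ)) →ₗ[ℤ] ((G ⧸ H) →₀ ℤ))
    (hf : Function.Injective f)
    (hexact : LinearMap.range f = LinearMap.ker π)
    (hπ : LinearMap.range π
      = LinearMap.ker (Finsupp.linearCombination ℤ (fun _ : G ⧸ H => (1 : ℤ))))
    (hfequiv : ∀ (x : G) (m : M),
      f (ρ x m) = fun i => (Representation.ofMulAction ℤ G (G ⧸ Hs i) x (MonoidAlgebra.ofCoeff (f m i))).coeff)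
    (hπequiv : ∀ (x : G) (v : (i : Fin r) → ((G ⧸ Hs i) →₀ ℤ)),
      π (fun i => (Representation.ofMulAction ℤ G (G ⧸ Hs i) x (MonoidAlgebra.ofCoeff (v i))).coeff)
        = (Representation.ofMulAction ℤ G (G ⧸ H) x (MonoidAlgebra.ofCoeff (π v))).coeff)
    (g : G) :
    ∑ i : Fin r, (Nat.card {x : G ⧸ Hs i // g • x = x} : ℤ)
      = LinearMap.trace ℤ M (ρ g) + (Nat.card {y : G ⧸ H // g • y = y} : ℤ) - 1 := by
  classical
  letI : Fintype G := Fintype.ofFinite G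
  set Tg : ((i : Fin r) → ((G ⧸ Hs i) →₀ ℤ)) →ₗ[ℤ] ((i : Fin r) → ((G ⧸ Hs i) →₀ ℤ)) :=
    LinearMap.pi (fun i => (Finsupp.lmapDomain ℤ ℤ (fun x : G ⧸ Hs i => g • x)) ∘ₗ LinearMap.proj i)
    with hTgdef
  have hTgapp : ∀ v, Tg v = fun i => Finsupp.lmapDomain ℤ ℤ (fun x : G ⧸ Hs i => g • x) (v i) :=
    fun v => rfl
  set Sg : ((G ⧸ H) →₀ ℤ) →ₗ[ℤ] ((G ⧸ H) →₀ ℤ) :=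
    (Finsupp.lmapDomain ℤ ℤ (fun x : G ⧸ H => g • x) : ((G ⧸ H) →₀ ℤ) →ₗ[ℤ] ((G ⧸ H) →₀ ℤ))
    with hSgdef
  set aug : ((G ⧸ H) →₀ ℤ) →ₗ[ℤ] ℤ :=
    Finsupp.linearCombination ℤ (fun _ : G ⧸ H => (1 : ℤ)) with haugdef
  have haug_inv : ∀ y, aug (Sg y) = aug y := by
    intro y
    rw [hSgdef, Finsupp.lmapDomain_apply, haugdef,
      Finsupp.linearCombination_mapDomain]
    rfl
  have hTker : ∀ v ∈ LinearMap.ker π, Tg v ∈ LinearMap.ker π := by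
    intro v hv
    rw [LinearMap.mem_ker] at hv ⊢
    rw [hTgapp v]
    exact (hπequiv g v).trans (by rw [hv, MonoidAlgebra.ofCoeff_zero, map_zero, MonoidAlgebra.coeff_zero])
  have hTker' : LinearMap.ker π ≤ (LinearMap.ker π).comap Tg := fun v hv => hTker v hv
  have hSker : ∀ y ∈ LinearMap.ker aug, Sg y ∈ LinearMap.ker aug := by
    intro y hy
    rw [LinearMap.mem_ker] at hy ⊢
    rw [haug_inv y, hy]
  have hSker' : LinearMap.ker aug ≤ (LinearMap.ker aug).comap Sg := fun y hy => hSker y hy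
  -- instances
  haveI freeQ1 := Module.Free.of_equiv (π.quotKerEquivRange).symm
  haveI finQ1 := Module.Finite.equiv (π.quotKerEquivRange).symm
  haveI freeQ2 := Module.Free.of_equiv (aug.quotKerEquivRange).symm
  haveI finQ2 := Module.Finite.equiv (aug.quotKerEquivRange).symm
  have hA := my_trace_add_of_invariant (LinearMap.ker π) Tg hTker hTker'
  have hB := my_trace_add_of_invariant (LinearMap.ker aug) Sg hSker hSker'
  -- restriction is conjugate to ρ g
  set e1 : M ≃ₗ[ℤ] LinearMap.ker π :=
    (LinearEquiv.ofInjective f hf).trans (LinearEquiv.ofEq _ _ hexact) with he1def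
  have he1 : ∀ m, ((e1 m : ((i : Fin r) → ((G ⧸ Hs i) →₀ ℤ)))) = f m := by
    intro m
    rw [he1def]
    simp [LinearEquiv.ofInjective_apply, LinearEquiv.coe_ofEq_apply]
  have h1 : LinearMap.trace ℤ _ (Tg.restrict hTker) = LinearMap.trace ℤ M (ρ g) := by
    rw [← LinearMap.trace_conj' (ρ g) e1]
    congr 1
    apply LinearMap.ext
    intro x
    obtain ⟨m, rfl⟩ := e1.surjective x
    apply Subtype.ext
    rw [LinearEquiv.conj_apply_apply, e1.symm_apply_apply]
    rw [LinearMap.restrict_coe_apply, he1, he1]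
    exact (hfequiv g m).symm
  -- quotient map conjugate to Sg restricted to ker aug
  set e2 : ((((i : Fin r) → ((G ⧸ Hs i) →₀ ℤ))) ⧸ LinearMap.ker π) ≃ₗ[ℤ] LinearMap.ker aug :=
    π.quotKerEquivRange.trans (LinearEquiv.ofEq _ _ hπ) with he2def
  have he2 : ∀ v, ((e2 (Submodule.Quotient.mk v) : ((G ⧸ H) →₀ ℤ))) = π v := by
    intro v
    rw [he2def]
    simp [LinearMap.quotKerEquivRange_apply_mk, LinearEquiv.coe_ofEq_apply]
  have h2 : LinearMap.trace ℤ _ (Submodule.mapQ (LinearMap.ker π) (LinearMap.ker π) Tg hTker')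
      = LinearMap.trace ℤ _ (Sg.restrict hSker) := by
    rw [← LinearMap.trace_conj' (Submodule.mapQ (LinearMap.ker π) (LinearMap.ker π) Tg hTker') e2]
    congr 1
    apply LinearMap.ext
    intro x
    obtain ⟨q, rfl⟩ := e2.surjective x
    obtain ⟨v, rfl⟩ := Submodule.mkQ_surjective _ q
    apply Subtype.ext
    rw [LinearEquiv.conj_apply_apply, e2.symm_apply_apply]
    rw [LinearMap.restrict_coe_apply, Submodule.mkQ_apply, Submodule.mapQ_apply, he2, he2]
    exact hπequiv g v
  -- quotient map for Sg is the identity, of trace 1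
  have h3 : LinearMap.trace ℤ _ (Submodule.mapQ (LinearMap.ker aug) (LinearMap.ker aug) Sg hSker')
      = 1 := by
    have hid : Submodule.mapQ (LinearMap.ker aug) (LinearMap.ker aug) Sg hSker'
        = LinearMap.id := by
      apply Submodule.linearMap_qext
      apply LinearMap.ext
      intro y
      rw [LinearMap.comp_apply, LinearMap.comp_apply, Submodule.mkQ_apply, Submodule.mapQ_apply,
        LinearMap.id_apply]
      rw [Submodule.Quotient.eq, LinearMap.mem_ker, map_sub, haug_inv y, sub_self]
    rw [hid]
    rw [LinearMap.trace_id]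
    have hfr : finrank ℤ (((G ⧸ H) →₀ ℤ) ⧸ LinearMap.ker aug)
        = finrank ℤ (LinearMap.range aug) := LinearEquiv.finrank_eq aug.quotKerEquivRange
    have hrange : LinearMap.range aug = ⊤ := by
      rw [LinearMap.range_eq_top]
      intro c
      refine ⟨Finsupp.single (QuotientGroup.mk (1:G) : G ⧸ H) c, ?_⟩
      rw [haugdef, Finsupp.linearCombination_single, smul_eq_mul, mul_one]
    rw [hfr, hrange, finrank_top, finrank_self]
    norm_num
  -- permutation traces
  have hTrS : LinearMap.trace ℤ _ Sg = (Nat.card {y : G ⧸ H // g • y = y} : ℤ) := by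
    refine my_trace_perm Finsupp.basisSingleOne (fun y => g • y) Sg ?_
    intro y
    have hb : (Finsupp.basisSingleOne : Basis (G ⧸ H) ℤ _) y = Finsupp.single y 1 := by
      rw [Finsupp.coe_basisSingleOne]
    have hb' : (Finsupp.basisSingleOne : Basis (G ⧸ H) ℤ _) (g • y) = Finsupp.single (g • y) 1 := by
      rw [Finsupp.coe_basisSingleOne]
    rw [hb, hb', hSgdef]
    rw [Finsupp.lmapDomain_apply, Finsupp.mapDomain_single]
  have hsingle : ∀ (i : Fin r) (u : (G ⧸ Hs i) →₀ ℤ),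
      Tg (Pi.single i u) = Pi.single i (Finsupp.lmapDomain ℤ ℤ (fun x : G ⧸ Hs i => g • x) u) := by
    intro i u
    rw [hTgapp]
    funext j
    by_cases hj : j = i
    · subst hj
      rw [Pi.single_eq_same, Pi.single_eq_same]
    · rw [Pi.single_eq_of_ne hj, Pi.single_eq_of_ne hj, map_zero]
  have hTrT : LinearMap.trace ℤ _ Tg
      = (Nat.card {p : Σ i : Fin r, G ⧸ Hs i // g • p.2 = p.2} : ℤ) := by
    have h := my_trace_perm (Pi.basis (fun i : Fin r =>
        (Finsupp.basisSingleOne : Basis (G ⧸ Hs i) ℤ ((G ⧸ Hs i) →₀ ℤ))))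
      (fun p => ⟨p.1, g • p.2⟩) Tg ?_
    · rw [h]
      congr 1
      apply Nat.card_congr
      apply Equiv.subtypeEquivRight
      intro p
      constructor
      · intro hp
        obtain ⟨i, x⟩ := p
        rw [Sigma.mk.inj_iff] at hp
        exact eq_of_heq hp.2
      · intro hp
        obtain ⟨i, x⟩ := p
        simpa using hp
    · intro j
      obtain ⟨i, x⟩ := j
      rw [Pi.basis_apply, Pi.basis_apply]
      have hb : ∀ (K : Subgroup G) (z : G ⧸ K),
          (Finsupp.basisSingleOne : Basis (G ⧸ K) ℤ _) z = Finsupp.single z 1 := by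
        intro K z
        rw [Finsupp.coe_basisSingleOne]
      rw [hb, hb, hsingle i, Finsupp.lmapDomain_apply, Finsupp.mapDomain_single]
  have hsigma : Nat.card {p : Σ i : Fin r, G ⧸ Hs i // g • p.2 = p.2}
      = ∑ i : Fin r, Nat.card {x : G ⧸ Hs i // g • x = x} := by
    have e : {p : Σ i : Fin r, G ⧸ Hs i // g • p.2 = p.2}
        ≃ Σ i : Fin r, {x : G ⧸ Hs i // g • x = x} :=
      { toFun := fun p => ⟨p.1.1, ⟨p.1.2, p.2⟩⟩
        invFun := fun q => ⟨⟨q.1, q.2.1⟩, q.2.2⟩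
        left_inv := fun ⟨⟨i, x⟩, h⟩ => rfl
        right_inv := fun ⟨i, x, h⟩ => rfl }
    rw [Nat.card_congr e, Nat.card_eq_fintype_card, Fintype.card_sigma]
    exact Finset.sum_congr rfl fun i _ => (Nat.card_eq_fintype_card).symm
  -- assemble
  have hrs : LinearMap.trace ℤ _ (Sg.restrict hSker)
      = (Nat.card {y : G ⧸ H // g • y = y} : ℤ) - 1 := by
    have hB' := hB
    rw [hTrS, h3] at hB'
    linarith
  calc ∑ i : Fin r, (Nat.card {x : G ⧸ Hs i // g • x = x} : ℤ)
      = ((∑ i : Fin r, Nat.card {x : G ⧸ Hs i // g • x = x} : ℕ) : ℤ) := by push_cast; rfl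
    _ = (Nat.card {p : Σ i : Fin r, G ⧸ Hs i // g • p.2 = p.2} : ℤ) := by rw [hsigma]
    _ = LinearMap.trace ℤ _ Tg := hTrT.symm
    _ = LinearMap.trace ℤ M (ρ g) + (Nat.card {y : G ⧸ H // g • y = y} : ℤ) - 1 := by
        rw [hA, h1, h2, hrs]; ring

theorem my_card_split {α : Type*} [Finite α] (p : α → Prop) :
    Nat.card {x // p x} + Nat.card {x // ¬ p x} = Nat.card α := by
  classical
  letI : Fintype α := Fintype.ofFinite α
  rw [Nat.card_eq_fintype_card, Nat.card_eq_fintype_card, Nat.card_eq_fintype_card,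
    Fintype.card_subtype, Fintype.card_subtype]
  exact Finset.card_filter_add_card_filter_not p

theorem my_card_univ {α : Type*} [Finite α] (p : α → Prop) (hp : ∀ x, p x) :
    Nat.card {x // p x} = Nat.card α := Nat.card_congr (Equiv.subtypeUnivEquiv hp)


set_option maxHeartbeats 1600000 in
/-- Let `G ≠ {1}` be a finite group, `H ≤ G` a subgroup containing no
nontrivial normal subgroup of `G` (i.e. `⋂_{g∈G} gHg⁻¹ = {1}`, expressed via the normal
core), let `H₁, …, H_r` be subgroups of `H`, and let
`0 → M → ⊕_{i=1}^r ℤ[G/H_i] → ω(G/H) → 0` be an exact sequence of `ℤ[G]`-modules, where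
`M` is a `G`-lattice (a `ℤ[G]`-module which is finite free over `ℤ`).  Here `ℤ[G/K]` is
modelled as `(G ⧸ K) →₀ ℤ` with `G` acting by left translation, the direct sum is the
(finite) product, `ω(G/H)` is the kernel of the augmentation map `ℤ[G/H] → ℤ`, and the
maps `f, π` are `G`-equivariant `ℤ`-linear maps with `f` injective, `ker π = range f` and
`range π = ω(G/H)`.  Then the `G`-action on `M` fails to be faithful if and only if
`r = 1` and `H₁ = H`. -/
theorem lattice_not_faithful_iff {G : Type*} [Group G] [Finite G] [Nontrivial G]
    (H : Subgroup G) (hH : H.normalCore = ⊥)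
    (r : ℕ) (Hs : Fin r → Subgroup G) (hHs : ∀ i, Hs i ≤ H)
    (M : Type*) [AddCommGroup M] [Module ℤ M] [Module.Free ℤ M] [Module.Finite ℤ M]
    (ρ : Representation ℤ G M)
    (f : M →ₗ[ℤ] ((i : Fin r) → ((G ⧸ Hs i) →₀ ℤ)))
    (π : ((i : Fin r) → ((G ⧸ Hs i) →₀ ℤ)) →ₗ[ℤ] ((G ⧸ H) →₀ ℤ))
    (hf : Function.Injective f)
    (hexact : LinearMap.range f = LinearMap.ker π)
    (hπ : LinearMap.range π
      = LinearMap.ker (Finsupp.linearCombination ℤ (fun _ : G ⧸ H => (1 : ℤ))))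
    (hfequiv : ∀ (x : G) (m : M),
      f (ρ x m) = fun i => (Representation.ofMulAction ℤ G (G ⧸ Hs i) x (MonoidAlgebra.ofCoeff (f m i))).coeff)
    (hπequiv : ∀ (x : G) (v : (i : Fin r) → ((G ⧸ Hs i) →₀ ℤ)),
      π (fun i => (Representation.ofMulAction ℤ G (G ⧸ Hs i) x (MonoidAlgebra.ofCoeff (v i))).coeff)
        = (Representation.ofMulAction ℤ G (G ⧸ H) x (MonoidAlgebra.ofCoeff (π v))).coeff) :
    ¬ Function.Injective ⇑ρ ↔ (r = 1 ∧ ∀ i, Hs i = H) := by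
  classical
  constructor
  · intro hni
    obtain ⟨g₀, hg₀ne, hg₀⟩ : ∃ g₀ : G, g₀ ≠ 1 ∧ ρ g₀ = 1 := by
      rw [Function.not_injective_iff] at hni
      obtain ⟨a, b, hab, hne⟩ := hni
      refine ⟨b⁻¹ * a, fun hc => hne ?_, ?_⟩
      · rwa [inv_mul_eq_one, eq_comm] at hc
      · rw [map_mul, hab, ← map_mul, inv_mul_cancel, map_one]
    have key1 := my_key H r Hs M ρ f π hf hexact hπ hfequiv hπequiv 1
    have keyg := my_key H r Hs M ρ f π hf hexact hπ hfequiv hπequiv g₀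
    rw [hg₀, ← map_one ρ] at keyg
    -- rewrite the counts at 1
    have hpt : ∀ i : Fin r, Nat.card {x : G ⧸ Hs i // (1 : G) • x = x}
        = Nat.card {x : G ⧸ Hs i // g₀ • x = x} + Nat.card {x : G ⧸ Hs i // ¬ g₀ • x = x} := by
      intro i
      rw [my_card_split, my_card_univ _ (fun x => one_smul G x)]
    have hptH : Nat.card {y : G ⧸ H // (1 : G) • y = y}
        = Nat.card {y : G ⧸ H // g₀ • y = y} + Nat.card {y : G ⧸ H // ¬ g₀ • y = y} := by
      rw [my_card_split, my_card_univ _ (fun x => one_smul G x)]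
    rw [hptH] at key1
    simp only [hpt] at key1
    -- the subtracted identity
    have hsum : ∑ i : Fin r, Nat.card {x : G ⧸ Hs i // ¬ g₀ • x = x}
        = Nat.card {y : G ⧸ H // ¬ g₀ • y = y} := by
      have h1 : ∑ i : Fin r, ((Nat.card {x : G ⧸ Hs i // g₀ • x = x}
            + Nat.card {x : G ⧸ Hs i // ¬ g₀ • x = x} : ℕ) : ℤ)
          = ∑ i : Fin r, ((Nat.card {x : G ⧸ Hs i // g₀ • x = x} : ℤ))
            + ∑ i : Fin r, ((Nat.card {x : G ⧸ Hs i // ¬ g₀ • x = x} : ℤ)) := by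
        push_cast
        rw [Finset.sum_add_distrib]
      rw [h1] at key1
      have : ∑ i : Fin r, ((Nat.card {x : G ⧸ Hs i // ¬ g₀ • x = x} : ℤ))
          = (Nat.card {y : G ⧸ H // ¬ g₀ • y = y} : ℤ) := by
        push_cast at key1 keyg ⊢
        linarith
      exact_mod_cast this
    -- the number of non-fixed points of g₀ on G/H is positive
    have hd : 1 ≤ Nat.card {y : G ⧸ H // ¬ g₀ • y = y} := by
      have hcore : g₀ ∉ H.normalCore := by
        rw [hH]
        intro hc
        exact hg₀ne (Subgroup.mem_bot.mp hc)
      have : ∃ y : G ⧸ H, ¬ g₀ • y = y := by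
        by_contra hall
        push_neg at hall
        apply hcore
        rw [Subgroup.normalCore_eq_ker, MonoidHom.mem_ker]
        apply Equiv.ext
        intro y
        simpa using hall y
      obtain ⟨y, hy⟩ := this
      haveI : Nonempty {y : G ⧸ H // ¬ g₀ • y = y} := ⟨⟨y, hy⟩⟩
      exact Nat.card_pos
    -- each summand is at least the count for H
    have hle : ∀ i : Fin r, Nat.card {y : G ⧸ H // ¬ g₀ • y = y}
        ≤ Nat.card {x : G ⧸ Hs i // ¬ g₀ • x = x} := by
      intro i
      have := my_nonfixed_le (hHs i) g₀
      simpa [Ne] using this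
    have hr1 : r = 1 := by
      rcases Nat.lt_or_ge r 2 with hr | hr
      · interval_cases r
        · simp at hsum
          omega
        · rfl
      · exfalso
        have hge : ∑ i : Fin r, Nat.card {x : G ⧸ Hs i // ¬ g₀ • x = x}
            ≥ ∑ _i : Fin r, Nat.card {y : G ⧸ H // ¬ g₀ • y = y} :=
          Finset.sum_le_sum fun i _ => hle i
        rw [Finset.sum_const, Finset.card_univ, Fintype.card_fin, smul_eq_mul] at hge
        rw [hsum] at hge
        nlinarith [hd, hge]
    subst hr1
    refine ⟨rfl, fun i => ?_⟩
    have hi0 : i = 0 := Subsingleton.elim i 0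
    subst hi0
    by_contra hne
    have h2 := my_nonfixed_two_le (hHs 0) hne g₀
    rw [Fin.sum_univ_one] at hsum
    simp only [Ne] at h2
    omega
  · rintro ⟨hr, hHsH⟩
    subst hr
    have h0 : Hs 0 = H := hHsH 0
    subst h0
    have htr : ∀ g : G, LinearMap.trace ℤ M (ρ g) = 1 := by
      intro g
      have k := my_key (Hs 0) 1 Hs M ρ f π hf hexact hπ hfequiv hπequiv g
      rw [Fin.sum_univ_one] at k
      linarith
    have hrk : Module.finrank ℤ M = 1 := by
      have h1 := htr 1
      rw [map_one, LinearMap.trace_one] at h1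
      exact_mod_cast h1
    have hid : ∀ g : G, ρ g = LinearMap.id := fun g => my_endo_eq_id hrk (ρ g) (htr g)
    obtain ⟨a, ha⟩ := exists_ne (1 : G)
    intro hinj
    exact ha (hinj (by rw [hid a, hid 1]))
end

section
/- Let G be a finite group, H ≤ G a subgroup containing no nontrivial normal subgroup of G (i.e., ⋂_{g∈G} gHg⁻¹ = {1}), let H₁ be a proper subgroup of H, and let 0 → M → ℤ[G/H₁] → ω(G/H) → 0 be an exact sequence of ℤ[G]-modules, where M is a G-lattice. Then the G-action on M is faithful. -/
open Module MulAction Subgroup LinearMap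

section AuxAll

open Module MulAction Subgroup LinearMap

/-- The fixed submodule of the permutation action of `g` on `α →₀ ℤ` has rank the number of
orbits of `⟨g⟩` on `α`. -/
lemma finrank_fixed_eq_card_orbits {G : Type*} [Group G] {α : Type*} [Finite α]
    [MulAction G α] (g : G) :
    finrank ℤ (LinearMap.ker (Finsupp.lmapDomain ℤ ℤ (fun a : α => g • a) - LinearMap.id))
      = Nat.card (Quotient (orbitRel (zpowers g) α)) := by
  classical
  set Q := Quotient (orbitRel (zpowers g) α)
  have : Finite Q := Quotient.finite _
  -- the linear map sending `w : Q →₀ ℤ` to the function `a ↦ w ⟦a⟧`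
  set L : (Q →₀ ℤ) →ₗ[ℤ] (α →₀ ℤ) :=
    { toFun := fun w => Finsupp.equivFunOnFinite.symm (fun a => w (Quotient.mk _ a))
      map_add' := by intro w₁ w₂; ext a; simp
      map_smul' := by intro c w; ext a; simp } with hL
  have hLapp : ∀ (w : Q →₀ ℤ) (a : α), L w a = w (Quotient.mk _ a) := by
    intro w a; simp [hL]
  have hLinj : Function.Injective L := by
    intro w₁ w₂ h
    ext c
    induction c using Quotient.inductionOn with
    | h a => rw [← hLapp w₁ a, ← hLapp w₂ a, h]
  have horb : ∀ v ∈ LinearMap.ker (Finsupp.lmapDomain ℤ ℤ (fun a : α => g • a) - LinearMap.id),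
      ∀ (k : G), k ∈ zpowers g → ∀ a : α, v (k • a) = v a := by
    intro v hv k hk a
    obtain ⟨m, rfl⟩ := Subgroup.mem_zpowers_iff.mp hk
    clear hk
    have hfix : ∀ b : α, v (g⁻¹ • b) = v b := by
      intro b
      have hker := LinearMap.mem_ker.mp hv
      rw [LinearMap.sub_apply, LinearMap.id_apply, sub_eq_zero] at hker
      have h2 := congrArg (fun u : α →₀ ℤ => u (g • (g⁻¹ • b))) hker
      have h3 : Finsupp.mapDomain (fun a : α => g • a) v (g • (g⁻¹ • b)) = v (g⁻¹ • b) :=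
        Finsupp.mapDomain_apply (MulAction.injective g) v (g⁻¹ • b)
      have h4 := h3.symm.trans h2
      rw [smul_inv_smul] at h4
      exact h4
    have hfix' : ∀ b : α, v (g • b) = v b := by
      intro b
      have h := hfix (g • b); rw [inv_smul_smul] at h; exact h.symm
    induction m using Int.induction_on with
    | zero => simp
    | succ n ih =>
        have h : (g : G) ^ ((n : ℤ) + 1) • a = g • ((g : G) ^ (n : ℤ) • a) := by
          rw [← mul_smul, ← zpow_one_add]; ring_nf
        rw [h, hfix', ih]
    | pred n ih =>
        have h : (g : G) ^ (-(n : ℤ) - 1) • a = g⁻¹ • ((g : G) ^ (-(n : ℤ)) • a) := by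
          rw [← mul_smul, ← zpow_neg_one, ← zpow_add]; ring_nf
        rw [h, hfix, ih]
  have hker : LinearMap.ker (Finsupp.lmapDomain ℤ ℤ (fun a : α => g • a) - LinearMap.id)
      = LinearMap.range L := by
    apply le_antisymm
    · intro v hv
      refine ⟨Finsupp.equivFunOnFinite.symm (fun c => v c.out), ?_⟩
      ext a
      rw [hLapp]
      simp only [Finsupp.coe_equivFunOnFinite_symm]
      have hrel : (Quotient.mk (orbitRel (zpowers g) α) a).out ∈ orbit (zpowers g) a := by
        rw [← orbitRel_apply]
        exact Quotient.exact (Quotient.out_eq _)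
      obtain ⟨k, hk⟩ := mem_orbit_iff.mp hrel
      rw [← hk]
      exact horb v hv k k.2 a
    · rintro _ ⟨w, rfl⟩
      rw [LinearMap.mem_ker]
      ext a
      simp only [LinearMap.sub_apply, LinearMap.id_apply, Finsupp.coe_sub, Pi.sub_apply,
        Finsupp.lmapDomain_apply, Finsupp.coe_zero, Pi.zero_apply]
      have h3 : Finsupp.mapDomain (fun b : α => g • b) (L w) (g • (g⁻¹ • a)) = L w (g⁻¹ • a) :=
        Finsupp.mapDomain_apply (MulAction.injective g) _ _
      rw [smul_inv_smul] at h3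
      rw [h3, hLapp, hLapp]
      have heq : (Quotient.mk (orbitRel (zpowers g) α) (g⁻¹ • a))
          = Quotient.mk (orbitRel (zpowers g) α) a :=
        Quotient.sound (orbitRel_apply.mpr ⟨⟨g⁻¹, inv_mem (mem_zpowers g)⟩, rfl⟩)
      rw [heq, sub_self]
  rw [hker]
  have := Fintype.ofFinite Q
  rw [← LinearEquiv.finrank_eq (LinearEquiv.ofInjective L hLinj), finrank_finsupp_self,
    Nat.card_eq_fintype_card]
open MulAction Subgroup

lemma card_orbits_le {G : Type*} [Group G] [Finite G] (H H₁ : Subgroup G) (hle : H₁ ≤ H) (g : G) :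
    Nat.card (Quotient (orbitRel (zpowers g) (G ⧸ H₁)))
      ≤ Nat.card (Quotient (orbitRel (zpowers g) (G ⧸ H)))
        * Nat.card (H ⧸ H₁.subgroupOf H) := by
  classical
  set e := quotientEquivProdOfLE hle with he
  set p : (G ⧸ H₁) → (G ⧸ H) := fun x => (e x).1 with hpdef
  have hp : ∀ a : G, p (↑a) = (↑a : G ⧸ H) := fun a => rfl
  have hpe : ∀ (u : G) (x : G ⧸ H₁), p (u • x) = u • p x := by
    intro u x
    induction x using QuotientGroup.induction_on with
    | H a =>
      rw [MulAction.Quotient.smul_mk, hp, hp, MulAction.Quotient.smul_mk]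
  have hpc : ∀ a b : G ⧸ H₁, (orbitRel (zpowers g) (G ⧸ H₁)) a b
      → (orbitRel (zpowers g) (G ⧸ H)) (p a) (p b) := by
    intro a b hab
    rw [orbitRel_apply] at hab ⊢
    obtain ⟨k, hk⟩ := mem_orbit_iff.mp hab
    exact mem_orbit_iff.mpr ⟨k, by rw [← hk]; exact (hpe (k : G) b).symm⟩
  set pbar : Quotient (orbitRel (zpowers g) (G ⧸ H₁))
      → Quotient (orbitRel (zpowers g) (G ⧸ H)) := Quotient.map p hpc with hpbar
  have hsec : ∀ c : Quotient (orbitRel (zpowers g) (G ⧸ H₁)),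
      ∃ x : G ⧸ H₁, Quotient.mk _ x = c ∧ p x = (pbar c).out := by
    intro c
    obtain ⟨a, rfl⟩ := Quotient.exists_rep c
    have hrel : (pbar (Quotient.mk _ a)).out ∈ orbit (zpowers g) (p a) := by
      rw [← orbitRel_apply]
      exact Quotient.exact (Quotient.out_eq _)
    obtain ⟨k, hk⟩ := mem_orbit_iff.mp hrel
    refine ⟨(k : G) • a, ?_, by rw [hpe (k : G) a]; exact hk⟩
    exact Quotient.sound (orbitRel_apply.mpr ⟨k, rfl⟩)
  choose sec hsec1 hsec2 using hsec
  have hJ : Function.Injective (fun c => (pbar c, (e (sec c)).2)) := by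
    intro c₁ c₂ hc
    have hc' : (pbar c₁, (e (sec c₁)).2) = (pbar c₂, (e (sec c₂)).2) := hc
    obtain ⟨h1, h2⟩ := Prod.mk.inj hc'
    have h3 : (e (sec c₁)).1 = (e (sec c₂)).1 := by
      show p (sec c₁) = p (sec c₂)
      rw [hsec2 c₁, hsec2 c₂, h1]
    have : e (sec c₁) = e (sec c₂) := Prod.ext h3 h2
    have := e.injective this
    rw [← hsec1 c₁, ← hsec1 c₂, this]
  calc Nat.card (Quotient (orbitRel (zpowers g) (G ⧸ H₁)))
      ≤ Nat.card ((Quotient (orbitRel (zpowers g) (G ⧸ H))) × (H ⧸ H₁.subgroupOf H)) :=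
        Nat.card_le_card_of_injective _ hJ
    _ = _ := Nat.card_prod _ _

end AuxAll

lemma finrank_comap_subtype {R V : Type*} [Ring R] [AddCommGroup V] [Module R V]
    (p q : Submodule R V) :
    finrank R (q.comap p.subtype) = finrank R (p ⊓ q : Submodule R V) := by
  rw [← Submodule.map_comap_subtype]
  exact (Submodule.equivMapOfInjective p.subtype (Submodule.injective_subtype p) _).finrank_eq

universe uV uR

lemma finrank_ker_add_finrank_range {R : Type uR} {V : Type uV} {W : Type*} [Ring R]
    [HasRankNullity.{uV, uR} R]
    [StrongRankCondition R] [AddCommGroup V] [Module R V]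
    [Module.Finite R V] [AddCommGroup W] [Module R W] (φ : V →ₗ[R] W) :
    finrank R (LinearMap.ker φ) + finrank R (LinearMap.range φ) = finrank R V := by
  have h := Submodule.finrank_quotient_add_finrank (LinearMap.ker φ)
  rw [LinearEquiv.finrank_eq φ.quotKerEquivRange] at h
  omega

lemma arith_aux (N T m : ℕ) (hm : 2 ≤ m) (h : N * m + T ≤ T * m + N) : N ≤ T := by
  by_contra hlt
  push_neg at hlt
  have h1 : (T : ℤ) + 1 ≤ N := by exact_mod_cast hlt
  have h2 : (2 : ℤ) ≤ m := by exact_mod_cast hm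
  have h3 : (N : ℤ) * m + T ≤ T * m + N := by exact_mod_cast h
  have h4 : (0 : ℤ) ≤ (N : ℤ) - T := by linarith
  have h5 : ((N : ℤ) - T) * 2 ≤ ((N : ℤ) - T) * m := mul_le_mul_of_nonneg_left h2 h4
  nlinarith

set_option maxHeartbeats 1000000 in
/-- Let `G` be a finite group, `H ≤ G` a subgroup containing no
nontrivial normal subgroup of `G` (i.e. its normal core `⋂_{g∈G} gHg⁻¹` is trivial),
let `H₁` be a proper subgroup of `H`, and let `0 → M → ℤ[G/H₁] → ω(G/H) → 0` be an exact
sequence of `ℤ[G]`-modules, where `M` is a `G`-lattice (a `ℤ[G]`-module which is finite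
free over `ℤ`).  Here `ℤ[G/K]` is modelled as `(G ⧸ K) →₀ ℤ` with `G` acting by left
translation, `ω(G/H)` is the kernel of the augmentation map `ℤ[G/H] → ℤ`, and the maps
`f, π` are `G`-equivariant `ℤ`-linear maps with `f` injective, `ker π = range f` and
`range π = ω(G/H)`.  Then the `G`-action on `M` is faithful. -/
theorem lattice_faithful_of_proper {G : Type*} [Group G] [Finite G]
    (H : Subgroup G) (hH : H.normalCore = ⊥)
    (H₁ : Subgroup G) (hH₁ : H₁ < H)
    (M : Type*) [AddCommGroup M] [Module ℤ M] [Module.Free ℤ M] [Module.Finite ℤ M]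
    (ρ : Representation ℤ G M)
    (f : M →ₗ[ℤ] ((G ⧸ H₁) →₀ ℤ))
    (π : ((G ⧸ H₁) →₀ ℤ) →ₗ[ℤ] ((G ⧸ H) →₀ ℤ))
    (hf : Function.Injective f)
    (hexact : LinearMap.range f = LinearMap.ker π)
    (hπ : LinearMap.range π
      = LinearMap.ker (Finsupp.linearCombination ℤ (fun _ : G ⧸ H => (1 : ℤ))))
    (hfequiv : ∀ (x : G) (m : M),
      f (ρ x m) = Finsupp.lmapDomain ℤ ℤ (fun q : G ⧸ H₁ => x • q) (f m))
    (hπequiv : ∀ (x : G) (v : (G ⧸ H₁) →₀ ℤ),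
      π (Finsupp.lmapDomain ℤ ℤ (fun q : G ⧸ H₁ => x • q) v)
        = Finsupp.lmapDomain ℤ ℤ (fun q : G ⧸ H => x • q) (π v)) :
    Function.Injective ⇑ρ := by
  classical
  have : Fintype (G ⧸ H₁) := Fintype.ofFinite _
  have : Fintype (G ⧸ H) := Fintype.ofFinite _
  have key : ∀ g : G, ρ g = 1 → g = 1 := by
    intro g hg
    set σ : ((G ⧸ H₁) →₀ ℤ) →ₗ[ℤ] ((G ⧸ H₁) →₀ ℤ) :=
      Finsupp.lmapDomain ℤ ℤ (fun q : G ⧸ H₁ => g • q) with hσ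
    set τ : ((G ⧸ H) →₀ ℤ) →ₗ[ℤ] ((G ⧸ H) →₀ ℤ) :=
      Finsupp.lmapDomain ℤ ℤ (fun q : G ⧸ H => g • q) with hτ
    set aug := Finsupp.linearCombination ℤ (fun _ : G ⧸ H => (1 : ℤ)) with haug
    set Φ₁ := LinearMap.ker (σ - LinearMap.id) with hΦ₁
    set Φ := LinearMap.ker (τ - LinearMap.id) with hΦ
    -- the kernel of π is fixed pointwise by σ
    have hπg : ∀ v : (G ⧸ H₁) →₀ ℤ, π (σ v) = τ (π v) := fun v => hπequiv g v
    have hNfix : LinearMap.ker π ≤ Φ₁ := by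
      intro v hv
      rw [← hexact] at hv
      obtain ⟨u, rfl⟩ := hv
      have h1 : ρ g u = u := by rw [hg]; rfl
      have h2 : σ (f u) = f u := by rw [hσ, ← hfequiv g u, h1]
      rw [hΦ₁, LinearMap.mem_ker, LinearMap.sub_apply, LinearMap.id_apply, h2, sub_self]
    -- equivariance of powers
    have hcomm : ∀ (i : ℕ) (v : (G ⧸ H₁) →₀ ℤ), π ((σ ^ i) v) = (τ ^ i) (π v) := by
      intro i
      induction i with
      | zero => intro v; simp
      | succ n ih =>
          intro v
          have h1 : (σ ^ (n + 1)) v = σ ((σ ^ n) v) := by rw [pow_succ']; rfl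
          have h2 : (τ ^ (n + 1)) (π v) = τ ((τ ^ n) (π v)) := by rw [pow_succ']; rfl
          rw [h1, h2, hπg, ih v]
    -- averaging operator
    set K := orderOf g with hK
    have hKpos : 0 < K := orderOf_pos g
    have hσpow : ∀ i : ℕ, σ ^ i = Finsupp.lmapDomain ℤ ℤ (fun q : G ⧸ H₁ => g ^ i • q) := by
      intro i
      induction i with
      | zero =>
          apply LinearMap.ext; intro v
          simp only [pow_zero, one_smul, Module.End.one_apply, Finsupp.lmapDomain_apply]
          exact Finsupp.mapDomain_id.symm
      | succ n ih =>
          apply LinearMap.ext; intro v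
          rw [pow_succ', Module.End.mul_apply, ih, hσ]
          simp only [Finsupp.lmapDomain_apply]
          rw [← Finsupp.mapDomain_comp]
          congr 1
          funext q
          simp [pow_succ', mul_smul]
    have hσK : σ ^ K = 1 := by
      rw [hσpow, hK, pow_orderOf_eq_one, ← pow_zero σ, hσpow, pow_zero]
    set A : ((G ⧸ H₁) →₀ ℤ) →ₗ[ℤ] ((G ⧸ H₁) →₀ ℤ) := ∑ i ∈ Finset.range K, σ ^ i with hA
    have hσA : σ * A = A := by
      rw [hA, Finset.mul_sum]
      have h1 : ∀ i : ℕ, σ * σ ^ i = σ ^ (i + 1) := fun i => (pow_succ' σ i).symm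
      simp only [h1]
      obtain ⟨K', hK'⟩ : ∃ K', K = K' + 1 := ⟨K - 1, (Nat.succ_pred_eq_of_pos hKpos).symm⟩
      rw [hK', Finset.sum_range_succ, Finset.sum_range_succ' (fun i => σ ^ i) K']
      rw [← hK', hσK, pow_zero]
    have hAmem : ∀ v : (G ⧸ H₁) →₀ ℤ, A v ∈ Φ₁ := by
      intro v
      rw [hΦ₁, LinearMap.mem_ker, LinearMap.sub_apply, LinearMap.id_apply]
      have : σ (A v) = A v := by
        rw [← Module.End.mul_apply, hσA]
      rw [this, sub_self]
    -- τ fixes Φ pointwise, and so do its powers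
    have hτfix : ∀ w ∈ Φ, τ w = w := by
      intro w hw
      rw [hΦ, LinearMap.mem_ker, LinearMap.sub_apply, LinearMap.id_apply, sub_eq_zero] at hw
      exact hw
    have hτpow : ∀ w ∈ Φ, ∀ i : ℕ, (τ ^ i) w = w := by
      intro w hw i
      induction i with
      | zero => simp
      | succ n ih => rw [pow_succ, Module.End.mul_apply, hτfix w hw, ih]
    -- averaging: K • w is in the image of Φ₁ for w ∈ Φ ⊓ ker aug
    have havg : ∀ w ∈ Φ ⊓ LinearMap.ker aug,
        (K : ℤ) • w ∈ Submodule.map π Φ₁ := by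
      intro w hw
      have hwra : w ∈ LinearMap.range π := by rw [hπ]; exact hw.2
      obtain ⟨v, hv⟩ := hwra
      refine ⟨A v, hAmem v, ?_⟩
      have h3 : A v = ∑ i ∈ Finset.range K, (σ ^ i) v := by
        rw [hA]; exact LinearMap.sum_apply _ _ _
      rw [h3, map_sum]
      have h4 : ∀ i ∈ Finset.range K, π ((σ ^ i) v) = w := by
        intro i _
        rw [hcomm i v, hv, hτpow w hw.1 i]
      rw [Finset.sum_congr rfl h4, Finset.sum_const, Finset.card_range,
        Nat.cast_smul_eq_nsmul ℤ K w]
    -- rank bookkeeping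
    set n := Nat.card (G ⧸ H) with hn
    set m := Nat.card (H ⧸ H₁.subgroupOf H) with hm
    set t := Nat.card (Quotient (orbitRel (zpowers g) (G ⧸ H))) with ht
    set t₁ := Nat.card (Quotient (orbitRel (zpowers g) (G ⧸ H₁))) with ht₁
    have hrk1 : finrank ℤ ((G ⧸ H₁) →₀ ℤ) = n * m := by
      rw [finrank_finsupp_self, ← Nat.card_eq_fintype_card,
        Nat.card_congr (quotientEquivProdOfLE hH₁.le), Nat.card_prod, hn, hm]
    have hrk0 : finrank ℤ ((G ⧸ H) →₀ ℤ) = n := by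
      rw [finrank_finsupp_self, ← Nat.card_eq_fintype_card, hn]
    -- the augmentation is surjective
    have haugsurj : Function.Surjective aug := by
      intro z
      refine ⟨Finsupp.single ((1 : G) : G ⧸ H) z, ?_⟩
      rw [haug, Finsupp.linearCombination_single, smul_eq_mul, mul_one]
    have hωrk : finrank ℤ (LinearMap.ker aug) + 1 = n := by
      have h := finrank_ker_add_finrank_range aug
      rw [LinearMap.range_eq_top.mpr haugsurj, finrank_top, Module.finrank_self, hrk0] at h
      exact h
    have hkerπ : finrank ℤ (LinearMap.ker π) + finrank ℤ (LinearMap.ker aug) = n * m := by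
      have h := finrank_ker_add_finrank_range π
      rw [hπ, hrk1] at h
      exact h
    -- finrank of Φ₁ via the restriction of π
    have hresker : finrank ℤ (LinearMap.ker (π.domRestrict Φ₁)) = finrank ℤ (LinearMap.ker π) := by
      rw [LinearMap.ker_domRestrict, finrank_comap_subtype, inf_eq_right.mpr hNfix]
    have hresrange : finrank ℤ (Φ ⊓ LinearMap.ker aug : Submodule ℤ ((G ⧸ H) →₀ ℤ))
        ≤ finrank ℤ (LinearMap.range (π.domRestrict Φ₁)) := by
      set μ : (Φ ⊓ LinearMap.ker aug : Submodule ℤ ((G ⧸ H) →₀ ℤ)) →ₗ[ℤ] ((G ⧸ H) →₀ ℤ) :=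
        (K : ℤ) • (Φ ⊓ LinearMap.ker aug).subtype with hμ
      have hμinj : Function.Injective μ := by
        intro x y hxy
        rw [hμ] at hxy
        simp only [LinearMap.smul_apply, Submodule.coe_subtype] at hxy
        have hK0 : (K : ℤ) ≠ 0 := Int.natCast_ne_zero.mpr hKpos.ne'
        have := smul_right_injective ((G ⧸ H) →₀ ℤ) hK0 hxy
        exact Subtype.ext this
      have hμle : LinearMap.range μ ≤ LinearMap.range (π.domRestrict Φ₁) := by
        rintro _ ⟨x, rfl⟩
        rw [LinearMap.range_domRestrict]
        exact havg x x.2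
      calc finrank ℤ (Φ ⊓ LinearMap.ker aug : Submodule ℤ ((G ⧸ H) →₀ ℤ))
          = finrank ℤ (LinearMap.range μ) := (LinearEquiv.ofInjective μ hμinj).finrank_eq
        _ ≤ finrank ℤ (LinearMap.range (π.domRestrict Φ₁)) := Submodule.finrank_mono hμle
    have hΦ₁split : finrank ℤ (LinearMap.ker π)
        + finrank ℤ (LinearMap.range (π.domRestrict Φ₁)) = finrank ℤ Φ₁ := by
      have h := finrank_ker_add_finrank_range (π.domRestrict Φ₁)
      rw [hresker] at h
      exact h
    -- finrank of Φ ⊓ ker aug is at least finrank Φ - 1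
    have hinfaug : finrank ℤ Φ
        ≤ finrank ℤ (Φ ⊓ LinearMap.ker aug : Submodule ℤ ((G ⧸ H) →₀ ℤ)) + 1 := by
      have h := finrank_ker_add_finrank_range (aug.domRestrict Φ)
      rw [LinearMap.ker_domRestrict, finrank_comap_subtype] at h
      have h2 : finrank ℤ (LinearMap.range (aug.domRestrict Φ)) ≤ 1 := by
        have := Submodule.finrank_le (LinearMap.range (aug.domRestrict Φ))
        rwa [Module.finrank_self] at this
      omega
    -- identify the ranks of the fixed submodules with orbit counts
    have hfix1 : finrank ℤ Φ₁ = t₁ := by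
      rw [hΦ₁, hσ, ht₁]
      exact finrank_fixed_eq_card_orbits g
    have hfix0 : finrank ℤ Φ = t := by
      rw [hΦ, hτ, ht]
      exact finrank_fixed_eq_card_orbits g
    -- combinatorial bound
    have hcomb : t₁ ≤ t * m := card_orbits_le H H₁ hH₁.le g
    -- m ≥ 2
    have hm2 : 2 ≤ m := by
      have hmpos : 0 < m := Nat.card_pos
      have hmne1 : m ≠ 1 := by
        intro h1
        have : (H₁.subgroupOf H).index = 1 := by
          rw [Subgroup.index, ← hm, h1]
        have := Subgroup.index_eq_one.mp this
        rw [Subgroup.subgroupOf_eq_top] at this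
        exact hH₁.2 this
      omega
    -- derive n ≤ t
    have hmain : n * m + t ≤ t * m + n := by
      have e1 : finrank ℤ (LinearMap.ker π)
          + finrank ℤ (Φ ⊓ LinearMap.ker aug : Submodule ℤ ((G ⧸ H) →₀ ℤ)) ≤ t₁ := by
        rw [← hfix1, ← hΦ₁split]
        omega
      -- t ≤ finrank (Φ ⊓ ker aug) + 1
      have e2 : t ≤ finrank ℤ (Φ ⊓ LinearMap.ker aug : Submodule ℤ ((G ⧸ H) →₀ ℤ)) + 1 := by
        rw [← hfix0]; exact hinfaug
      -- put everything together linearly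
      have e3 : finrank ℤ (LinearMap.ker π) + t ≤ t₁ + 1 := by omega
      have e4 : t₁ ≤ t * m := hcomb
      -- finrank ker π = n * m - (n - 1)
      omega
    have hnt : n ≤ t := arith_aux n t m hm2 hmain
    -- conclude that g fixes every coset of H
    have hsurj : Function.Surjective
        (Quotient.mk (orbitRel (zpowers g) (G ⧸ H)) : (G ⧸ H) → _) :=
      fun q => Quotient.inductionOn q fun a => ⟨a, rfl⟩
    have hbij := hsurj.bijective_of_nat_card_le hnt
    have hfixall : ∀ x : G ⧸ H, g • x = x := by
      intro x
      have : Quotient.mk (orbitRel (zpowers g) (G ⧸ H)) (g • x)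
          = Quotient.mk (orbitRel (zpowers g) (G ⧸ H)) x :=
        Quotient.sound (orbitRel_apply.mpr ⟨⟨g, mem_zpowers g⟩, rfl⟩)
      exact hbij.1 this
    have hgcore : g⁻¹ ∈ H.normalCore := by
      change ∀ b : G, b * g⁻¹ * b⁻¹ ∈ H
      intro b
      have h1 : g • ((b⁻¹ : G) : G ⧸ H) = ((b⁻¹ : G) : G ⧸ H) := hfixall _
      rw [MulAction.Quotient.smul_mk] at h1
      have h2 := QuotientGroup.eq.mp h1
      simpa [mul_inv_rev, mul_assoc] using h2
    rw [hH, Subgroup.mem_bot] at hgcore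
    rw [← inv_inv g, hgcore, inv_one]
  intro a b hab
  have h1 : ρ (a * b⁻¹) = 1 := by
    rw [map_mul, hab, ← map_mul, mul_inv_cancel, map_one]
  exact mul_inv_eq_one.mp (key _ h1)
end

section
/- Let G be a finite group and H₁ ≤ H ≤ G subgroups. Then there is an isomorphism of ℚ[G]-modules ℚ[G/H₁] ≅ Ind_H^G ω(H/H₁)_ℚ ⊕ ω(G/H)_ℚ ⊕ ℚ, where the last summand ℚ carries the trivial G-action. -/
open Finsupp

namespace PMD

variable {G : Type*} [Group G] {H H₁ : Subgroup G}

/-- `jmap x ⟦h⟧ = ⟦x*h⟧`. -/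
def jmap (h₁ : H₁ ≤ H) (x : G) : (H ⧸ H₁.subgroupOf H) → G ⧸ H₁ :=
  Quotient.map' (fun h : H => x * (h : G)) (by
    intro a b hab
    rw [QuotientGroup.leftRel_apply] at hab ⊢
    have : ((a⁻¹ * b : H) : G) ∈ H₁ := hab
    push_cast at this
    simpa [mul_assoc, mul_inv_rev] using this)

lemma jmap_mk (h₁ : H₁ ≤ H) (x : G) (h : H) :
    jmap h₁ x (QuotientGroup.mk h) = QuotientGroup.mk (x * h) := rfl

lemma jmap_smul (h₁ : H₁ ≤ H) (x : G) (h : H) (c : H ⧸ H₁.subgroupOf H) :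
    jmap h₁ x (h • c) = jmap h₁ (x * h) c := by
  induction c using QuotientGroup.induction_on with
  | H h' =>
    rw [MulAction.Quotient.smul_mk, jmap_mk, jmap_mk, smul_eq_mul]
    push_cast
    rw [mul_assoc]

lemma jmap_gsmul (h₁ : H₁ ≤ H) (x y : G) (c : H ⧸ H₁.subgroupOf H) :
    x • jmap h₁ y c = jmap h₁ (x * y) c := by
  induction c using QuotientGroup.induction_on with
  | H h' =>
    rw [jmap_mk, jmap_mk, MulAction.Quotient.smul_mk, smul_eq_mul, mul_assoc]

lemma lmap_apply {M α : Type*} [Group M] [MulAction M α] (g : M) (v : α →₀ ℚ) (a : α) :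
    Finsupp.lmapDomain ℚ ℚ (fun c : α => g • c) v a = v (g⁻¹ • a) := by
  have := Finsupp.mapDomain_apply (MulAction.injective g) v (g⁻¹ • a)
  rw [smul_inv_smul] at this
  rw [Finsupp.lmapDomain_apply]
  exact this


section Sums

variable [Fintype (H ⧸ H₁.subgroupOf H)] [Fintype (G ⧸ H)] [Fintype (G ⧸ H₁)]

/-- sum of `v` over the fiber of `xH`. -/
noncomputable def Sv (h₁ : H₁ ≤ H) (v : (G ⧸ H₁) →₀ ℚ) (x : G) : ℚ :=
  ∑ c : H ⧸ H₁.subgroupOf H, v (jmap h₁ x c)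

lemma Sv_mul_right (h₁ : H₁ ≤ H) (v : (G ⧸ H₁) →₀ ℚ) (x : G) (h : H) :
    Sv h₁ v (x * h) = Sv h₁ v x := by
  unfold Sv
  rw [← Equiv.sum_comp (MulAction.toPerm h) (fun c => v (jmap h₁ x c))]
  refine Finset.sum_congr rfl fun c _ => ?_
  rw [MulAction.toPerm_apply, jmap_smul]

lemma Sv_smul (h₁ : H₁ ≤ H) (x y : G) (v : (G ⧸ H₁) →₀ ℚ) :
    Sv h₁ (Finsupp.lmapDomain ℚ ℚ (fun c : G ⧸ H₁ => x • c) v) y = Sv h₁ v (x⁻¹ * y) := by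
  unfold Sv
  refine Finset.sum_congr rfl fun c _ => ?_
  rw [PMD.lmap_apply, jmap_gsmul]

/-- `Pv v` is the pushforward of `v` to `G ⧸ H`, as a function. -/
noncomputable def Pv (h₁ : H₁ ≤ H) (v : (G ⧸ H₁) →₀ ℚ) : G ⧸ H → ℚ := fun d =>
  Quotient.liftOn' d (Sv h₁ v) (by
    intro a b hab
    rw [QuotientGroup.leftRel_apply] at hab
    have : b = a * (⟨a⁻¹ * b, hab⟩ : H) := by simp
    rw [this, Sv_mul_right])

lemma Pv_mk (h₁ : H₁ ≤ H) (v : (G ⧸ H₁) →₀ ℚ) (g : G) :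
    Pv h₁ v (QuotientGroup.mk g) = Sv h₁ v g := rfl

lemma Pv_out (h₁ : H₁ ≤ H) (v : (G ⧸ H₁) →₀ ℚ) (d : G ⧸ H) :
    Pv h₁ v d = Sv h₁ v d.out := by
  conv_lhs => rw [← QuotientGroup.out_eq' d]
  rfl

lemma fiber_bij (h₁ : H₁ ≤ H) :
    Function.Bijective (fun p : (G ⧸ H) × (H ⧸ H₁.subgroupOf H) =>
      jmap h₁ p.1.out p.2) := by
  constructor
  · rintro ⟨d, c⟩ ⟨d', c'⟩ hp
    induction c using QuotientGroup.induction_on with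
    | H h =>
    induction c' using QuotientGroup.induction_on with
    | H h' =>
    simp only [jmap_mk] at hp
    rw [QuotientGroup.eq] at hp
    have hd : d = d' := by
      have e1 : (QuotientGroup.mk (d.out * (h : G)) : G ⧸ H) = d := by
        rw [← QuotientGroup.out_eq' d]
        exact (QuotientGroup.eq.mpr (by simpa using h.2)).symm
      have e2 : (QuotientGroup.mk (d'.out * (h' : G)) : G ⧸ H) = d' := by
        rw [← QuotientGroup.out_eq' d']
        exact (QuotientGroup.eq.mpr (by simpa using h'.2)).symm
      rw [← e1, ← e2]
      exact QuotientGroup.eq.mpr (h₁ hp)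
    subst hd
    have hcc : (QuotientGroup.mk h : H ⧸ H₁.subgroupOf H) = QuotientGroup.mk h' := by
      rw [QuotientGroup.eq]
      have : ((h⁻¹ * h' : H) : G) ∈ H₁ := by
        push_cast
        simpa [mul_assoc, mul_inv_rev] using hp
      exact this
    simp [hcc]
  · intro a
    have hmem : (QuotientGroup.mk a.out : G ⧸ H).out⁻¹ * a.out ∈ H := by
      rw [← QuotientGroup.eq, QuotientGroup.out_eq']
    refine ⟨⟨QuotientGroup.mk a.out, QuotientGroup.mk ⟨_, hmem⟩⟩, ?_⟩
    simp only [jmap_mk]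
    rw [mul_inv_cancel_left, QuotientGroup.out_eq']

lemma sum_fiber (h₁ : H₁ ≤ H) (v : (G ⧸ H₁) →₀ ℚ) :
    ∑ d : G ⧸ H, Sv h₁ v d.out = ∑ a : G ⧸ H₁, v a := by
  have hb : ∑ p : (G ⧸ H) × (H ⧸ H₁.subgroupOf H), v (jmap h₁ p.1.out p.2)
      = ∑ a : G ⧸ H₁, v a :=
    Fintype.sum_bijective _ (fiber_bij h₁) _ _ (fun p => rfl)
  rw [← hb, Fintype.sum_prod_type]
  rfl

lemma lc_one {α : Type*} [Fintype α] (w : α →₀ ℚ) :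
    Finsupp.linearCombination ℚ (fun _ : α => (1 : ℚ)) w = ∑ a : α, w a := by
  rw [Finsupp.linearCombination_apply, Finsupp.sum_fintype]
  · simp
  · simp

lemma symm_apply {α : Type*} [Finite α] (f : α → ℚ) (a : α) :
    (Finsupp.equivFunOnFinite.symm f) a = f a := rfl

lemma eps_smul (h₁ : H₁ ≤ H) (x : G) (v : (G ⧸ H₁) →₀ ℚ) :
    ∑ a : G ⧸ H₁, (Finsupp.lmapDomain ℚ ℚ (fun c : G ⧸ H₁ => x • c) v) a
      = ∑ a : G ⧸ H₁, v a := by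
  simp only [PMD.lmap_apply]
  exact Equiv.sum_comp (MulAction.toPerm (x⁻¹ : G)) (fun a => v a)


lemma jmap_one (h₁ : H₁ ≤ H) (x : G) :
    jmap h₁ x (QuotientGroup.mk (1 : H)) = QuotientGroup.mk x := by
  rw [jmap_mk]; simp

lemma Sv_add (h₁ : H₁ ≤ H) (v w : (G ⧸ H₁) →₀ ℚ) (x : G) :
    Sv h₁ (v + w) x = Sv h₁ v x + Sv h₁ w x := by
  simp [Sv, Finset.sum_add_distrib]

lemma Sv_rsmul (h₁ : H₁ ≤ H) (r : ℚ) (v : (G ⧸ H₁) →₀ ℚ) (x : G) :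
    Sv h₁ (r • v) x = r * Sv h₁ v x := by
  simp [Sv, Finset.mul_sum]

lemma Pv_add (h₁ : H₁ ≤ H) (v w : (G ⧸ H₁) →₀ ℚ) (d : G ⧸ H) :
    Pv h₁ (v + w) d = Pv h₁ v d + Pv h₁ w d := by
  induction d using QuotientGroup.induction_on with
  | H g => rw [Pv_mk, Pv_mk, Pv_mk, Sv_add]

lemma Pv_rsmul (h₁ : H₁ ≤ H) (r : ℚ) (v : (G ⧸ H₁) →₀ ℚ) (d : G ⧸ H) :
    Pv h₁ (r • v) d = r * Pv h₁ v d := by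
  induction d using QuotientGroup.induction_on with
  | H g => rw [Pv_mk, Pv_mk, Sv_rsmul]

/-- first component of the decomposition map. -/
noncomputable def eF (h₁ : H₁ ≤ H) (v : (G ⧸ H₁) →₀ ℚ) (x : G) :
    (H ⧸ H₁.subgroupOf H) →₀ ℚ :=
  Finsupp.equivFunOnFinite.symm (fun c =>
    v (jmap h₁ x c) - (Fintype.card (H ⧸ H₁.subgroupOf H) : ℚ)⁻¹ * Sv h₁ v x)

lemma eF_apply (h₁ : H₁ ≤ H) (v : (G ⧸ H₁) →₀ ℚ) (x : G) (c : H ⧸ H₁.subgroupOf H) :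
    eF h₁ v x c
      = v (jmap h₁ x c) - (Fintype.card (H ⧸ H₁.subgroupOf H) : ℚ)⁻¹ * Sv h₁ v x := rfl

/-- second component of the decomposition map. -/
noncomputable def eW (h₁ : H₁ ≤ H) (v : (G ⧸ H₁) →₀ ℚ) : (G ⧸ H) →₀ ℚ :=
  Finsupp.equivFunOnFinite.symm (fun d =>
    Pv h₁ v d - (Fintype.card (G ⧸ H) : ℚ)⁻¹ * ∑ a : G ⧸ H₁, v a)

lemma eW_apply (h₁ : H₁ ≤ H) (v : (G ⧸ H₁) →₀ ℚ) (d : G ⧸ H) :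
    eW h₁ v d
      = Pv h₁ v d - (Fintype.card (G ⧸ H) : ℚ)⁻¹ * ∑ a : G ⧸ H₁, v a := rfl

/-- the decomposition map. -/
noncomputable def emap (h₁ : H₁ ≤ H) :
    ((G ⧸ H₁) →₀ ℚ) →ₗ[ℚ]
      ((G → ((H ⧸ H₁.subgroupOf H) →₀ ℚ)) × ((G ⧸ H) →₀ ℚ) × ℚ) where
  toFun v := (eF h₁ v, eW h₁ v, ∑ a : G ⧸ H₁, v a)
  map_add' v w := by
    refine Prod.ext ?_ (Prod.ext ?_ ?_)
    · funext x
      ext c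
      simp only [eF_apply, Finsupp.add_apply, Sv_add, Finsupp.coe_add, Pi.add_apply,
        Prod.fst_add, Finsupp.add_apply]
      ring
    · ext d
      simp only [eW_apply, Finsupp.add_apply, Pv_add, Finset.sum_add_distrib,
        Prod.snd_add, Prod.fst_add]
      ring
    · simp [Finsupp.add_apply, Finset.sum_add_distrib, Prod.snd_add]
  map_smul' r v := by
    refine Prod.ext ?_ (Prod.ext ?_ ?_)
    · funext x
      ext c
      simp only [eF_apply, Finsupp.smul_apply, Sv_rsmul, smul_eq_mul, RingHom.id_apply,
        Prod.smul_fst, Pi.smul_apply]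
      ring
    · ext d
      simp only [eW_apply, Finsupp.smul_apply, Pv_rsmul, smul_eq_mul, Finset.mul_sum,
        RingHom.id_apply, Prod.smul_snd, Prod.smul_fst]
      rw [mul_sub, Finset.mul_sum]
      simp [mul_comm, mul_left_comm]
    · simp [Finsupp.smul_apply, Finset.mul_sum]

lemma eF_sum (h₁ : H₁ ≤ H) (v : (G ⧸ H₁) →₀ ℚ) (x : G) :
    ∑ c : H ⧸ H₁.subgroupOf H, eF h₁ v x c = 0 := by
  have hn : (Fintype.card (H ⧸ H₁.subgroupOf H) : ℚ) ≠ 0 :=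
    Nat.cast_ne_zero.mpr Fintype.card_ne_zero
  simp only [eF_apply, Finset.sum_sub_distrib, Finset.sum_const, Finset.card_univ,
    nsmul_eq_mul]
  rw [show (∑ c : H ⧸ H₁.subgroupOf H, v (jmap h₁ x c)) = Sv h₁ v x from rfl,
    ← mul_assoc, mul_inv_cancel₀ hn, one_mul, sub_self]

lemma eF_hsmul (h₁ : H₁ ≤ H) (v : (G ⧸ H₁) →₀ ℚ) (x : G) (h : H) :
    eF h₁ v (x * h)
      = Finsupp.lmapDomain ℚ ℚ (fun c : H ⧸ H₁.subgroupOf H => h⁻¹ • c) (eF h₁ v x) := by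
  ext c
  rw [PMD.lmap_apply, inv_inv, eF_apply, eF_apply, jmap_smul,
    Sv_mul_right]

lemma eW_sum (h₁ : H₁ ≤ H) (v : (G ⧸ H₁) →₀ ℚ) :
    ∑ d : G ⧸ H, eW h₁ v d = 0 := by
  have hm : (Fintype.card (G ⧸ H) : ℚ) ≠ 0 :=
    Nat.cast_ne_zero.mpr Fintype.card_ne_zero
  simp only [eW_apply, Finset.sum_sub_distrib, Finset.sum_const, Finset.card_univ,
    nsmul_eq_mul, Pv_out, sum_fiber h₁ v, ← mul_assoc, mul_inv_cancel₀ hm, one_mul,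
    sub_self]

lemma eF_gsmul (h₁ : H₁ ≤ H) (x : G) (v : (G ⧸ H₁) →₀ ℚ) (y : G) :
    eF h₁ (Finsupp.lmapDomain ℚ ℚ (fun c : G ⧸ H₁ => x • c) v) y = eF h₁ v (x⁻¹ * y) := by
  ext c
  rw [eF_apply, eF_apply, Sv_smul, PMD.lmap_apply, jmap_gsmul]

lemma eW_gsmul (h₁ : H₁ ≤ H) (x : G) (v : (G ⧸ H₁) →₀ ℚ) :
    eW h₁ (Finsupp.lmapDomain ℚ ℚ (fun c : G ⧸ H₁ => x • c) v)
      = Finsupp.lmapDomain ℚ ℚ (fun c : G ⧸ H => x • c) (eW h₁ v) := by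
  ext d
  induction d using QuotientGroup.induction_on with
  | H g =>
    rw [PMD.lmap_apply, eW_apply, Pv_mk, Sv_smul, eps_smul h₁ x v,
      MulAction.Quotient.smul_mk, smul_eq_mul, eW_apply, Pv_mk]

end Sums

end PMD


/-- The function model of the induced module `Ind_H^G ω(H/H₁)_ℚ = ℚ[G] ⊗_{ℚ[H]} ω(H/H₁)_ℚ`
(for a finite group these are canonically isomorphic): `f : G → ℚ[H/H₁]` belongs to the
induced module iff every value `f x` lies in `ω(H/H₁)_ℚ` (the kernel of the augmentation
`ℚ[H/H₁] → ℚ`) and `f (x·h) = h⁻¹ • (f x)` for all `x ∈ G`, `h ∈ H`.  The `G`-action on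
this module is `(g • f) x = f (g⁻¹ x)`. -/
def MemInducedOmega {G : Type*} [Group G] (H H₁ : Subgroup G)
    (f : G → ((H ⧸ H₁.subgroupOf H) →₀ ℚ)) : Prop :=
  (∀ x : G,
      Finsupp.linearCombination ℚ (fun _ : H ⧸ H₁.subgroupOf H => (1 : ℚ)) (f x) = 0)
  ∧ ∀ (x : G) (h : H), f (x * h) =
      Finsupp.lmapDomain ℚ ℚ (fun c : H ⧸ H₁.subgroupOf H => h⁻¹ • c) (f x)

/-- Let `G` be a finite group and `H₁ ≤ H ≤ G` subgroups.  Then there is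
an isomorphism of `ℚ[G]`-modules `ℚ[G/H₁] ≅ Ind_H^G ω(H/H₁)_ℚ ⊕ ω(G/H)_ℚ ⊕ ℚ`, where the
last summand `ℚ` carries the trivial `G`-action.  Here `ℚ[G/K]` is modelled as
`(G ⧸ K) →₀ ℚ` with `G` acting by left translation of cosets, `ω(G/H)_ℚ` is the kernel of
the augmentation map `ℚ[G/H] → ℚ`, the induced module is realized by its function model
`MemInducedOmega` inside `G → ℚ[H/H₁]`, and the isomorphism is an injective `G`-equivariant
`ℚ`-linear map from `ℚ[G/H₁]` onto the direct sum of the three submodules. -/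
theorem perm_module_decomposition {G : Type*} [Group G] [Finite G]
    (H H₁ : Subgroup G) (h₁ : H₁ ≤ H) :
    ∃ e : ((G ⧸ H₁) →₀ ℚ) →ₗ[ℚ]
        ((G → ((H ⧸ H₁.subgroupOf H) →₀ ℚ)) × ((G ⧸ H) →₀ ℚ) × ℚ),
      Function.Injective e
      ∧ Set.range e = {p | MemInducedOmega H H₁ p.1
          ∧ Finsupp.linearCombination ℚ (fun _ : G ⧸ H => (1 : ℚ)) p.2.1 = 0}
      ∧ ∀ (x : G) (v : (G ⧸ H₁) →₀ ℚ),
          e (Finsupp.lmapDomain ℚ ℚ (fun c : G ⧸ H₁ => x • c) v)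
            = (fun y => (e v).1 (x⁻¹ * y),
               Finsupp.lmapDomain ℚ ℚ (fun c : G ⧸ H => x • c) (e v).2.1,
               (e v).2.2) := by
  classical
  letI : Fintype (H ⧸ H₁.subgroupOf H) := Fintype.ofFinite _
  letI : Fintype (G ⧸ H) := Fintype.ofFinite _
  letI : Fintype (G ⧸ H₁) := Fintype.ofFinite _
  have hn : (Fintype.card (H ⧸ H₁.subgroupOf H) : ℚ) ≠ 0 :=
    Nat.cast_ne_zero.mpr Fintype.card_ne_zero
  have hm : (Fintype.card (G ⧸ H) : ℚ) ≠ 0 :=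
    Nat.cast_ne_zero.mpr Fintype.card_ne_zero
  refine ⟨PMD.emap h₁, ?_, ?_, ?_⟩
  · -- injectivity via an explicit left inverse
    have hL : Function.LeftInverse
        (fun p : (G → ((H ⧸ H₁.subgroupOf H) →₀ ℚ)) × ((G ⧸ H) →₀ ℚ) × ℚ =>
          Finsupp.equivFunOnFinite.symm (fun a : G ⧸ H₁ =>
            p.1 a.out (QuotientGroup.mk (1 : H))
              + (Fintype.card (H ⧸ H₁.subgroupOf H) : ℚ)⁻¹ *
                (p.2.1 (QuotientGroup.mk a.out) + (Fintype.card (G ⧸ H) : ℚ)⁻¹ * p.2.2)))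
        (PMD.emap h₁) := by
      intro v
      ext a
      rw [PMD.symm_apply]
      have e1 : (PMD.emap h₁ v).1 = PMD.eF h₁ v := rfl
      have e2 : (PMD.emap h₁ v).2.1 = PMD.eW h₁ v := rfl
      have e3 : (PMD.emap h₁ v).2.2 = ∑ b : G ⧸ H₁, v b := rfl
      rw [e1, e2, e3, PMD.eF_apply, PMD.eW_apply, PMD.jmap_one, PMD.Pv_mk,
        QuotientGroup.out_eq']
      ring
    exact hL.injective
  · -- range computation
    ext p
    constructor
    · rintro ⟨v, rfl⟩
      refine ⟨⟨fun x => ?_, fun x h => ?_⟩, ?_⟩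
      · show Finsupp.linearCombination ℚ _ (PMD.eF h₁ v x) = 0
        rw [PMD.lc_one]
        exact PMD.eF_sum h₁ v x
      · exact PMD.eF_hsmul h₁ v x h
      · show Finsupp.linearCombination ℚ _ (PMD.eW h₁ v) = 0
        rw [PMD.lc_one]
        exact PMD.eW_sum h₁ v
    · intro hp
      obtain ⟨f, w, c⟩ := p
      obtain ⟨⟨hf1, hf2⟩, hw⟩ := hp
      dsimp only at hf1 hf2 hw
      set v : (G ⧸ H₁) →₀ ℚ := Finsupp.equivFunOnFinite.symm (fun a : G ⧸ H₁ =>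
        f a.out (QuotientGroup.mk (1 : H))
          + (Fintype.card (H ⧸ H₁.subgroupOf H) : ℚ)⁻¹ *
            (w (QuotientGroup.mk a.out) + (Fintype.card (G ⧸ H) : ℚ)⁻¹ * c)) with hv
      have hv_mk : ∀ g : G, v (QuotientGroup.mk g)
          = f g (QuotientGroup.mk (1 : H))
            + (Fintype.card (H ⧸ H₁.subgroupOf H) : ℚ)⁻¹ *
              (w (QuotientGroup.mk g) + (Fintype.card (G ⧸ H) : ℚ)⁻¹ * c) := by
        intro g
        rw [hv, PMD.symm_apply]
        have hmem : g⁻¹ * (QuotientGroup.mk g : G ⧸ H₁).out ∈ H₁ :=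
          QuotientGroup.eq.mp (QuotientGroup.out_eq' (QuotientGroup.mk g)).symm
        set h : H := ⟨g⁻¹ * (QuotientGroup.mk g : G ⧸ H₁).out, h₁ hmem⟩ with hh
        have htt : (QuotientGroup.mk g : G ⧸ H₁).out = g * h := by
          rw [hh]; simp
        have hWg : (QuotientGroup.mk (g * h) : G ⧸ H) = QuotientGroup.mk g :=
          (QuotientGroup.eq.mpr (by simpa using h.2)).symm
        have hsm : h • (QuotientGroup.mk (1 : H) : H ⧸ H₁.subgroupOf H)
            = QuotientGroup.mk h := by
          rw [MulAction.Quotient.smul_mk, smul_eq_mul, mul_one]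
        have hh1 : (QuotientGroup.mk h : H ⧸ H₁.subgroupOf H)
            = QuotientGroup.mk (1 : H) := by
          rw [QuotientGroup.eq]
          have : ((h⁻¹ * 1 : H) : G) ∈ H₁ := by
            push_cast
            simpa [hh] using inv_mem hmem
          exact this
        rw [htt, hf2 g h, PMD.lmap_apply, inv_inv, hsm, hh1, hWg]
      have hv_jmap : ∀ (x : G) (c0 : H ⧸ H₁.subgroupOf H),
          v (PMD.jmap h₁ x c0)
            = f x c0 + (Fintype.card (H ⧸ H₁.subgroupOf H) : ℚ)⁻¹ *
              (w (QuotientGroup.mk x) + (Fintype.card (G ⧸ H) : ℚ)⁻¹ * c) := by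
        intro x c0
        induction c0 using QuotientGroup.induction_on with
        | H h =>
          rw [PMD.jmap_mk, hv_mk (x * h), hf2 x h, PMD.lmap_apply,
            inv_inv]
          have hsm : h • (QuotientGroup.mk (1 : H) : H ⧸ H₁.subgroupOf H)
              = QuotientGroup.mk h := by
            rw [MulAction.Quotient.smul_mk, smul_eq_mul, mul_one]
          have h2 : (QuotientGroup.mk (x * (h : G)) : G ⧸ H) = QuotientGroup.mk x :=
            (QuotientGroup.eq.mpr (by simpa using h.2)).symm
          rw [hsm, h2]
      have hSv : ∀ x : G, PMD.Sv h₁ v x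
          = w (QuotientGroup.mk x) + (Fintype.card (G ⧸ H) : ℚ)⁻¹ * c := by
        intro x
        have hsum : ∑ c0 : H ⧸ H₁.subgroupOf H, f x c0 = 0 := by
          rw [← PMD.lc_one]; exact hf1 x
        show (∑ c0 : H ⧸ H₁.subgroupOf H, v (PMD.jmap h₁ x c0)) = _
        simp only [hv_jmap x]
        rw [Finset.sum_add_distrib, hsum, Finset.sum_const, Finset.card_univ,
          nsmul_eq_mul, ← mul_assoc, mul_inv_cancel₀ hn, one_mul, zero_add]
      have hE : ∑ a : G ⧸ H₁, v a = c := by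
        have hwsum : ∑ d : G ⧸ H, w d = 0 := by
          rw [← PMD.lc_one]; exact hw
        rw [← PMD.sum_fiber h₁ v]
        have hout : ∀ d : G ⧸ H, PMD.Sv h₁ v d.out
            = w d + (Fintype.card (G ⧸ H) : ℚ)⁻¹ * c := by
          intro d
          rw [hSv d.out, QuotientGroup.out_eq']
        simp only [hout]
        rw [Finset.sum_add_distrib, hwsum, Finset.sum_const, Finset.card_univ,
          nsmul_eq_mul, ← mul_assoc, mul_inv_cancel₀ hm, one_mul, zero_add]
      refine ⟨v, ?_⟩
      refine Prod.ext ?_ (Prod.ext ?_ ?_)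
      · show PMD.eF h₁ v = f
        funext x
        ext c0
        rw [PMD.eF_apply, hv_jmap, hSv]
        ring
      · show PMD.eW h₁ v = w
        ext d
        induction d using QuotientGroup.induction_on with
        | H g =>
          rw [PMD.eW_apply, PMD.Pv_mk, hSv, hE]
          ring
      · show (∑ a : G ⧸ H₁, v a) = c
        exact hE
  · -- equivariance
    intro x v
    refine Prod.ext ?_ (Prod.ext ?_ ?_)
    · show PMD.eF h₁ (Finsupp.lmapDomain ℚ ℚ (fun c : G ⧸ H₁ => x • c) v)
          = fun y => PMD.eF h₁ v (x⁻¹ * y)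
      funext y
      exact PMD.eF_gsmul h₁ x v y
    · exact PMD.eW_gsmul h₁ x v
    · exact PMD.eps_smul h₁ x v
end
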